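/- The closure of the set { bar h_{B₁} ∘ bar h_{B₂} ∘ ⋯ ∘ bar h_{B_n}(0) : n ≥ 1, B₁,…,B_n ∈ 𝒜 } of all finite compositions of dual inverse branches applied to 0 equals the interval [√3 − 2, √3]. -/

import Mathlib

open MeasureTheory Real Set Filter Topology

namespace SCF

/-- The involution `ι(x) = (1−x)/(1+x)`. -/
noncomputable def iota (x : ℝ) : ℝ := (1 - x) / (1 + x)

/-- Even continued-fraction step.  For `y ∈ (0,1/2]` one has
`⌊(1/y+1)/2⌋ = k` whenever `1/y ∈ (2k−1, 2k+1)`, so `Te y = |1/y − 2k|`;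
explicitly `Te y = 1/y − 2` on `[1/3,1/2]`, `Te y = 1/y − 2k` on
`[1/(2k+1), 1/(2k))` and `Te y = 2k − 1/y` on `[1/(2k), 1/(2k−1))` (`k ≥ 2`). -/
noncomputable def Te (y : ℝ) : ℝ := |1 / y - 2 * (⌊(1 / y + 1) / 2⌋ : ℝ)|

/-- The spliced continued fraction (SCF) map `T : [0,1] → [0,1]`, with
`T 0 = 0`, `T 1 = 1`.  On `(0,1/2]` it is the even continued fraction map
(see `Te`), and on `(1/2,1)` it is the odd–odd map, which is the conjugate
`ι ∘ Te ∘ ι` of the even map; this agrees with the branchwise definition: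
`T x = (k x − (k−1))/(k − (k+1) x)` on `((k−1)/k, (2k−1)/(2k+1)]` and
`T x = (k − (k+1) x)/(k x − (k−1))` on `((2k−1)/(2k+1), k/(k+1)]` for `k ≥ 2`. -/
noncomputable def T (x : ℝ) : ℝ :=
  if x ≤ 0 then 0
  else if 1 ≤ x then 1
  else if x ≤ 1 / 2 then Te x
  else iota (Te (iota x))

/-- Parity label of a digit: `e` (even cusp) or `o` (odd–odd cusp). -/
inductive Par | e | o
deriving DecidableEq

/-- A candidate SCF digit `(a, ε)_s`. -/
structure Digit where
  a : ℤ
  eps : ℤ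
  s : Par
deriving DecidableEq

/-- The digit set `𝒜 = {(k,ε)_s : k ≥ 2, ε = ±1, s ∈ {e,o}} ∪ {(1,+1)_e}`. -/
def Digit.Valid (d : Digit) : Prop :=
  (2 ≤ d.a ∧ (d.eps = 1 ∨ d.eps = -1)) ∨ (d.a = 1 ∧ d.eps = 1 ∧ d.s = Par.e)

/-- The branch intervals `I_{(a,ε)_s}` of the SCF map. -/
noncomputable def branch (d : Digit) : Set ℝ :=
  match d.s with
  | Par.e =>
      if d.a = 1 then Set.Icc (1/3 : ℝ) (1/2)
      else if d.eps = 1 then Set.Ico (1 / (2 * (d.a : ℝ) + 1)) (1 / (2 * (d.a : ℝ)))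
      else Set.Ico (1 / (2 * (d.a : ℝ))) (1 / (2 * (d.a : ℝ) - 1))
  | Par.o =>
      if d.eps = 1 then
        Set.Ioc ((2 * (d.a : ℝ) - 1) / (2 * (d.a : ℝ) + 1)) ((d.a : ℝ) / ((d.a : ℝ) + 1))
      else
        Set.Ioc (((d.a : ℝ) - 1) / (d.a : ℝ)) ((2 * (d.a : ℝ) - 1) / (2 * (d.a : ℝ) + 1))

open Classical in
/-- The SCF digit of a point `y` (the unique valid digit `d` with `y ∈ I_d`;
well defined for every `y ∈ (0,1)`). -/
noncomputable def digit (y : ℝ) : Digit :=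
  if h : ∃ d : Digit, d.Valid ∧ y ∈ branch d then h.choose else ⟨1, 1, Par.e⟩

/-- The `n`-th SCF digit `(a_n(x), ε_n(x))_{s_n(x)}` of `x`, `n ≥ 1`,
determined by `T^[n−1] x ∈ I_{(a_n,ε_n)_{s_n}}`. -/
noncomputable def dig (n : ℕ) (x : ℝ) : Digit := digit (T^[n - 1] x)

/-- The `n`-th SCF partial quotient `a_n(x)`. -/
noncomputable def a (n : ℕ) (x : ℝ) : ℤ := (dig n x).a

/-- The invariant density `f_μ`. -/
noncomputable def fdens (x : ℝ) : ℝ :=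
  2 / (Real.log (2 + Real.sqrt 3) * (1 - (2 - Real.sqrt 3) * x) * (1 + Real.sqrt 3 * x))

/-- The absolutely continuous `T`-invariant probability measure `μ` on `(0,1)`. -/
noncomputable def mu : Measure ℝ :=
  (volume.restrict (Set.Ioo (0 : ℝ) 1)).withDensity fun x => ENNReal.ofReal (fdens x)

/-- The inverse branches `h_{(a,ε)_s}` of the SCF map `T`. -/
noncomputable def h (d : Digit) (x : ℝ) : ℝ :=
  match d.s with
  | Par.e => 1 / (2 * (d.a : ℝ) + (d.eps : ℝ) * x)
  | Par.o =>
      if d.eps = 1 then (((d.a : ℝ) - 1) * x + (d.a : ℝ)) / ((d.a : ℝ) * x + ((d.a : ℝ) + 1))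
      else ((d.a : ℝ) * x + ((d.a : ℝ) - 1)) / (((d.a : ℝ) + 1) * x + (d.a : ℝ))

/-- Composed inverse branch `h_{A^{(n)}} = h_{A₁} ∘ ⋯ ∘ h_{A_n}` of a word. -/
noncomputable def hWord (l : List Digit) : ℝ → ℝ :=
  l.foldr (fun d g => h d ∘ g) id

/-- The dual inverse branches `bar h_{(b,η)_t}`. -/
noncomputable def hbar (d : Digit) (y : ℝ) : ℝ :=
  match d.s with
  | Par.e => (d.eps : ℝ) / (2 * (d.a : ℝ) + y)
  | Par.o =>
      1 / (1 + (d.eps : ℝ) / (((d.a : ℝ) - ((max 0 d.eps : ℤ) : ℝ)) + 1 / (1 + y)))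

/-- The matrix `M_{(a,ε)_s}` associated with the inverse branch `h_{(a,ε)_s}`. -/
noncomputable def Mdig (d : Digit) : Matrix (Fin 2) (Fin 2) ℝ :=
  match d.s with
  | Par.e => !![0, 1; (d.eps : ℝ), 2 * (d.a : ℝ)]
  | Par.o =>
      !![(d.a : ℝ) - ((max 0 d.eps : ℤ) : ℝ), (d.a : ℝ) - ((max 0 d.eps : ℤ) : ℝ) + (d.eps : ℝ);
         (d.a : ℝ) - ((max 0 d.eps : ℤ) : ℝ) + 1, (d.a : ℝ) - ((max 0 d.eps : ℤ) : ℝ) + (d.eps : ℝ) + 1]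

/-- `M_n(x) = M_{(a₁,ε₁)_{s₁}} ⋯ M_{(a_n,ε_n)_{s_n}}`. -/
noncomputable def Mn (n : ℕ) (x : ℝ) : Matrix (Fin 2) (Fin 2) ℝ :=
  ((List.range n).map fun i => Mdig (digit (T^[i] x))).prod

/-- `P_n(x)`: the `(1,2)`-entry of `M_n(x)` (numerator of the `n`-th convergent). -/
noncomputable def Pc (n : ℕ) (x : ℝ) : ℝ := Mn n x 0 1

/-- `Q_n(x)`: the `(2,2)`-entry of `M_n(x)` (denominator of the `n`-th convergent). -/
noncomputable def Qc (n : ℕ) (x : ℝ) : ℝ := Mn n x 1 1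


-- AUX START
private lemma hs3 : Real.sqrt 3 ^ 2 = 3 := Real.sq_sqrt (by norm_num)

private lemma hs3one : 1 < Real.sqrt 3 := by
  nlinarith [Real.sqrt_nonneg 3, hs3]

private lemma hs3two : Real.sqrt 3 < 2 := by
  nlinarith [Real.sqrt_nonneg 3, hs3]

private lemma hbar_e_eq (a eps : ℤ) (y : ℝ) :
    hbar ⟨a, eps, Par.e⟩ y = (eps : ℝ) / (2 * (a : ℝ) + y) := rfl

private lemma hbar_o1_eq (a : ℤ) (ha : (2:ℝ) ≤ (a:ℝ)) (y : ℝ)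
    (hy1 : Real.sqrt 3 - 2 ≤ y) :
    hbar ⟨a, 1, Par.o⟩ y = (((a:ℝ) - 1) * y + (a:ℝ)) / ((a:ℝ) * y + (a:ℝ) + 1) := by
  have h1 : (0:ℝ) < 1 + y := by nlinarith [hs3one]
  have h2 : (0:ℝ) < (a:ℝ) - 1 + 1 / (1 + y) := by
    have : (0:ℝ) < 1 / (1 + y) := by positivity
    linarith
  have h3 : (0:ℝ) < 1 + 1 / ((a:ℝ) - 1 + 1 / (1 + y)) := by
    have : (0:ℝ) < 1 / ((a:ℝ) - 1 + 1 / (1 + y)) := by positivity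
    linarith
  have h4 : (0:ℝ) < (a:ℝ) * y + (a:ℝ) + 1 := by nlinarith [hs3one, hs3two]
  show (1:ℝ) / (1 + ((1:ℤ):ℝ) / (((a:ℝ) - ((max 0 (1:ℤ) : ℤ):ℝ)) + 1 / (1 + y))) = _
  have hm : ((max 0 (1:ℤ) : ℤ):ℝ) = 1 := by norm_num
  rw [hm]
  push_cast
  have h6 : (0:ℝ) < ((a:ℝ) - 1) * y + (a:ℝ) := by nlinarith [hs3one, hs3two]
  have e0 : (a:ℝ) - 1 + 1 / (1 + y) = (((a:ℝ) - 1) * y + (a:ℝ)) / (1 + y) := by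
    field_simp; ring
  rw [div_eq_div_iff h3.ne' h4.ne', one_mul, mul_add, mul_one, e0, one_div_div,
    mul_comm (((a:ℝ) - 1) * y + (a:ℝ)) ((1 + y) / (((a:ℝ) - 1) * y + (a:ℝ))),
    div_mul_cancel₀ _ h6.ne']
  ring

private lemma hbar_o2_eq (a : ℤ) (ha : (2:ℝ) ≤ (a:ℝ)) (y : ℝ)
    (hy1 : Real.sqrt 3 - 2 ≤ y) :
    hbar ⟨a, -1, Par.o⟩ y = ((a:ℝ) * y + (a:ℝ) + 1) / (((a:ℝ) - 1) * y + (a:ℝ)) := by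
  have h1 : (0:ℝ) < 1 + y := by nlinarith [hs3one]
  have h2 : (0:ℝ) < (a:ℝ) + 1 / (1 + y) := by
    have : (0:ℝ) < 1 / (1 + y) := by positivity
    linarith
  have h3 : (0:ℝ) < 1 + (-1) / ((a:ℝ) + 1 / (1 + y)) := by
    have hlt : 1 / ((a:ℝ) + 1 / (1 + y)) < 1 := by
      rw [div_lt_one h2]
      have : (0:ℝ) < 1 / (1 + y) := by positivity
      linarith
    have : (-1) / ((a:ℝ) + 1 / (1 + y)) = -(1 / ((a:ℝ) + 1 / (1 + y))) := by ring
    rw [this]; linarith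
  have h4 : (0:ℝ) < ((a:ℝ) - 1) * y + (a:ℝ) := by nlinarith [hs3one, hs3two]
  show (1:ℝ) / (1 + ((-1:ℤ):ℝ) / (((a:ℝ) - ((max 0 (-1:ℤ) : ℤ):ℝ)) + 1 / (1 + y))) = _
  have hm : ((max 0 (-1:ℤ) : ℤ):ℝ) = 0 := by norm_num
  rw [hm]
  push_cast
  rw [sub_zero]
  have h5 : ((a:ℝ) * (1 + y) + 1) ≠ 0 := by nlinarith [hs3one, hs3two]
  rw [div_eq_div_iff h3.ne' h4.ne']
  field_simp [h1.ne', h2.ne', h5]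
  ring

private lemma denO_lb (A y : ℝ) (hA : 2 ≤ A) (hy1 : Real.sqrt 3 - 2 ≤ y) :
    Real.sqrt 3 ≤ (A - 1) * y + A := by
  nlinarith [mul_nonneg (by linarith : (0:ℝ) ≤ A - 1) (by linarith : (0:ℝ) ≤ y - (Real.sqrt 3 - 2)),
    mul_nonneg (by linarith : (0:ℝ) ≤ A - 2) (by linarith [hs3one] : (0:ℝ) ≤ Real.sqrt 3 - 1)]

private lemma denO1_lb (A y : ℝ) (hA : 2 ≤ A) (hy1 : Real.sqrt 3 - 2 ≤ y) :
    2 * Real.sqrt 3 - 1 ≤ A * y + A + 1 := by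
  nlinarith [mul_nonneg (by linarith : (0:ℝ) ≤ A) (by linarith : (0:ℝ) ≤ y - (Real.sqrt 3 - 2)),
    mul_nonneg (by linarith : (0:ℝ) ≤ A - 2) (by linarith [hs3one] : (0:ℝ) ≤ Real.sqrt 3 - 1)]

private lemma hbar_mem (d : Digit) (hd : d.Valid) (y : ℝ)
    (hy1 : Real.sqrt 3 - 2 ≤ y) (hy2 : y ≤ Real.sqrt 3) :
    Real.sqrt 3 - 2 ≤ hbar d y ∧ hbar d y ≤ Real.sqrt 3 := by
  have hs1 := hs3one
  have hs2 := hs3two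
  have hsq := hs3
  obtain ⟨a, eps, sp⟩ := d
  cases sp with
  | e =>
    rw [hbar_e_eq]
    rcases hd with ⟨ha, heps⟩ | ⟨ha, heps, _⟩
    · have hA : (2:ℝ) ≤ (a:ℝ) := by exact_mod_cast ha
      rcases heps with rfl | rfl
      · have hden : Real.sqrt 3 ≤ 2 * (a:ℝ) + y := by linarith
        have hden0 : (0:ℝ) < 2 * (a:ℝ) + y := by linarith
        push_cast
        constructor
        · have : (0:ℝ) < 1 / (2 * (a:ℝ) + y) := by positivity
          linarith
        · rw [div_le_iff₀ hden0]; nlinarith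
      · have hden : 2 + Real.sqrt 3 ≤ 2 * (a:ℝ) + y := by linarith
        have hden0 : (0:ℝ) < 2 * (a:ℝ) + y := by linarith
        push_cast
        constructor
        · rw [le_div_iff₀ hden0]; nlinarith
        · have h0 : (0:ℝ) < 1 / (2 * (a:ℝ) + y) := by positivity
          have hneg : (-1:ℝ) / (2 * (a:ℝ) + y) = -(1 / (2 * (a:ℝ) + y)) := by ring
          rw [hneg]; linarith
    · have hA : (a:ℝ) = 1 := by exact_mod_cast ha
      subst heps
      rw [hA]
      have hden : Real.sqrt 3 ≤ 2 * (1:ℝ) + y := by linarith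
      have hden0 : (0:ℝ) < 2 * (1:ℝ) + y := by linarith
      push_cast
      constructor
      · have : (0:ℝ) < 1 / (2 * (1:ℝ) + y) := by positivity
        linarith
      · rw [div_le_iff₀ hden0]; nlinarith
  | o =>
    rcases hd with ⟨ha, heps⟩ | ⟨_, _, hpe⟩
    swap
    · exact absurd hpe (by simp)
    have hA : (2:ℝ) ≤ (a:ℝ) := by exact_mod_cast ha
    rcases heps with rfl | rfl
    · rw [hbar_o1_eq a hA y hy1]
      have hnum := denO_lb (a:ℝ) y hA hy1
      have hden := denO1_lb (a:ℝ) y hA hy1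
      have hden0 : (0:ℝ) < (a:ℝ) * y + (a:ℝ) + 1 := by linarith
      constructor
      · have : (0:ℝ) < (((a:ℝ) - 1) * y + (a:ℝ)) / ((a:ℝ) * y + (a:ℝ) + 1) :=
          div_pos (by linarith) hden0
        linarith
      · have hlt1 : (((a:ℝ) - 1) * y + (a:ℝ)) / ((a:ℝ) * y + (a:ℝ) + 1) ≤ 1 := by
          rw [div_le_one hden0]; linarith
        linarith
    · rw [hbar_o2_eq a hA y hy1]
      have hden := denO_lb (a:ℝ) y hA hy1
      have hnum := denO1_lb (a:ℝ) y hA hy1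
      have hden0 : (0:ℝ) < ((a:ℝ) - 1) * y + (a:ℝ) := by linarith
      constructor
      · have : (0:ℝ) < ((a:ℝ) * y + (a:ℝ) + 1) / (((a:ℝ) - 1) * y + (a:ℝ)) :=
          div_pos (by linarith) hden0
        linarith
      · rw [div_le_iff₀ hden0]
        have hc : ((a:ℝ) - 1) * (Real.sqrt 3 ^ 2 - 3) = 0 := by rw [hs3]; ring
        nlinarith [mul_nonneg (mul_nonneg (by linarith : (0:ℝ) ≤ (a:ℝ) - 1)
            (by linarith : (0:ℝ) ≤ 4 - 2 * Real.sqrt 3))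
            (by linarith : (0:ℝ) ≤ Real.sqrt 3 - y),
          mul_nonneg (by linarith : (0:ℝ) ≤ 2 * (a:ℝ) - 4)
            (by linarith : (0:ℝ) ≤ y - Real.sqrt 3 + 2), hc]

private lemma hbar_lip (d : Digit) (hd : d.Valid) (u v : ℝ)
    (hu1 : Real.sqrt 3 - 2 ≤ u) (hu2 : u ≤ Real.sqrt 3)
    (hv1 : Real.sqrt 3 - 2 ≤ v) (hv2 : v ≤ Real.sqrt 3) :
    |hbar d u - hbar d v| ≤ |u - v| / 3 := by
  have hs1 := hs3one
  have hs2 := hs3two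
  have hsq := hs3
  obtain ⟨a, eps, sp⟩ := d
  cases sp with
  | e =>
    have hA : (1:ℝ) ≤ (a:ℝ) := by
      rcases hd with ⟨ha, _⟩ | ⟨ha, _, _⟩
      · have ha' : (2:ℤ) ≤ a := ha
        exact_mod_cast (by omega : (1:ℤ) ≤ a)
      · have ha' : a = (1:ℤ) := ha
        exact_mod_cast (by omega : (1:ℤ) ≤ a)
    have hE : |(eps:ℝ)| = 1 := by
      rcases hd with ⟨_, rfl | rfl⟩ | ⟨_, rfl, _⟩ <;> norm_num
    have hdu : Real.sqrt 3 ≤ 2 * (a:ℝ) + u := by linarith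
    have hdv : Real.sqrt 3 ≤ 2 * (a:ℝ) + v := by linarith
    have hdu0 : (0:ℝ) < 2 * (a:ℝ) + u := by linarith
    have hdv0 : (0:ℝ) < 2 * (a:ℝ) + v := by linarith
    have key : hbar ⟨a, eps, Par.e⟩ u - hbar ⟨a, eps, Par.e⟩ v
        = (eps:ℝ) * (v - u) / ((2 * (a:ℝ) + u) * (2 * (a:ℝ) + v)) := by
      rw [hbar_e_eq, hbar_e_eq, div_sub_div _ _ hdu0.ne' hdv0.ne']
      congr 1
      ring
    rw [key, abs_div, abs_mul, hE, one_mul, abs_of_pos (mul_pos hdu0 hdv0), abs_sub_comm v u]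
    have h3 : (3:ℝ) ≤ (2 * (a:ℝ) + u) * (2 * (a:ℝ) + v) := by nlinarith
    exact div_le_div_of_nonneg_left (abs_nonneg _) (by norm_num) h3
  | o =>
    rcases hd with ⟨ha, heps⟩ | ⟨_, _, hpe⟩
    swap
    · exact absurd hpe (by simp)
    have hA : (2:ℝ) ≤ (a:ℝ) := by exact_mod_cast ha
    rcases heps with rfl | rfl
    · have hdu := denO1_lb (a:ℝ) u hA hu1
      have hdv := denO1_lb (a:ℝ) v hA hv1
      have hdu0 : (0:ℝ) < (a:ℝ) * u + (a:ℝ) + 1 := by linarith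
      have hdv0 : (0:ℝ) < (a:ℝ) * v + (a:ℝ) + 1 := by linarith
      rw [hbar_o1_eq a hA u hu1, hbar_o1_eq a hA v hv1]
      have key : (((a:ℝ) - 1) * u + (a:ℝ)) / ((a:ℝ) * u + (a:ℝ) + 1)
          - (((a:ℝ) - 1) * v + (a:ℝ)) / ((a:ℝ) * v + (a:ℝ) + 1)
          = (v - u) / (((a:ℝ) * u + (a:ℝ) + 1) * ((a:ℝ) * v + (a:ℝ) + 1)) := by
        rw [div_sub_div _ _ hdu0.ne' hdv0.ne']
        congr 1
        ring
      rw [key, abs_div, abs_of_pos (mul_pos hdu0 hdv0), abs_sub_comm v u]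
      have h3 : (3:ℝ) ≤ ((a:ℝ) * u + (a:ℝ) + 1) * ((a:ℝ) * v + (a:ℝ) + 1) := by nlinarith
      exact div_le_div_of_nonneg_left (abs_nonneg _) (by norm_num) h3
    · have hdu := denO_lb (a:ℝ) u hA hu1
      have hdv := denO_lb (a:ℝ) v hA hv1
      have hdu0 : (0:ℝ) < ((a:ℝ) - 1) * u + (a:ℝ) := by linarith
      have hdv0 : (0:ℝ) < ((a:ℝ) - 1) * v + (a:ℝ) := by linarith
      rw [hbar_o2_eq a hA u hu1, hbar_o2_eq a hA v hv1]
      have key : ((a:ℝ) * u + (a:ℝ) + 1) / (((a:ℝ) - 1) * u + (a:ℝ))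
          - ((a:ℝ) * v + (a:ℝ) + 1) / (((a:ℝ) - 1) * v + (a:ℝ))
          = (u - v) / ((((a:ℝ) - 1) * u + (a:ℝ)) * (((a:ℝ) - 1) * v + (a:ℝ))) := by
        rw [div_sub_div _ _ hdu0.ne' hdv0.ne']
        congr 1
        ring
      rw [key, abs_div, abs_of_pos (mul_pos hdu0 hdv0)]
      have h3 : (3:ℝ) ≤ (((a:ℝ) - 1) * u + (a:ℝ)) * (((a:ℝ) - 1) * v + (a:ℝ)) := by nlinarith
      exact div_le_div_of_nonneg_left (abs_nonneg _) (by norm_num) h3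


private lemma cover (x : ℝ) (hx1 : Real.sqrt 3 - 2 ≤ x) (hx2 : x ≤ Real.sqrt 3)
    (hx0 : x ≠ 0) (hxone : x ≠ 1) :
    ∃ d : Digit, d.Valid ∧ ∃ y : ℝ,
      (Real.sqrt 3 - 2 ≤ y ∧ y ≤ Real.sqrt 3) ∧ hbar d y = x := by
  have hs1 := hs3one
  have hs2 := hs3two
  have hsq := hs3
  rcases lt_or_gt_of_ne hx0 with hneg | hpos
  · -- x < 0 : even digit with eps = -1
    have hnx : 0 < -x := by linarith
    have ht2 : 2 + Real.sqrt 3 ≤ 1 / (-x) := by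
      rw [le_div_iff₀ hnx]
      nlinarith
    set t : ℝ := 1 / (-x) with ht
    set a : ℤ := ⌊(t - Real.sqrt 3) / 2⌋ + 1 with hadef
    have hA1 : (t - Real.sqrt 3) / 2 < (a:ℝ) := by
      rw [hadef]; push_cast; linarith [Int.lt_floor_add_one ((t - Real.sqrt 3) / 2)]
    have hA2 : (a:ℝ) ≤ (t - Real.sqrt 3) / 2 + 1 := by
      rw [hadef]; push_cast; linarith [Int.floor_le ((t - Real.sqrt 3) / 2)]
    have ha2 : 2 ≤ a := by
      have h1A : (1:ℝ) < (a:ℝ) := by linarith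
      have : (1:ℤ) < a := by exact_mod_cast h1A
      omega
    refine ⟨⟨a, -1, Par.e⟩, Or.inl ⟨ha2, Or.inr rfl⟩, t - 2 * (a:ℝ), ⟨by linarith, by linarith⟩, ?_⟩
    rw [hbar_e_eq]
    push_cast
    have he : 2 * (a:ℝ) + (t - 2 * (a:ℝ)) = t := by ring
    rw [he, ht]
    rw [div_eq_iff (by positivity : (1:ℝ) / (-x) ≠ 0)]
    field_simp
  · rcases le_or_gt (Real.sqrt 3 * x) 1 with hsm | hlg
    · -- 0 < x ≤ 1/√3 : even digit with eps = 1
      have ht2 : Real.sqrt 3 ≤ 1 / x := by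
        rw [le_div_iff₀ hpos]; linarith
      set t : ℝ := 1 / x with ht
      set a : ℤ := ⌊(t - Real.sqrt 3) / 2⌋ + 1 with hadef
      have hA1 : (t - Real.sqrt 3) / 2 < (a:ℝ) := by
        rw [hadef]; push_cast; linarith [Int.lt_floor_add_one ((t - Real.sqrt 3) / 2)]
      have hA2 : (a:ℝ) ≤ (t - Real.sqrt 3) / 2 + 1 := by
        rw [hadef]; push_cast; linarith [Int.floor_le ((t - Real.sqrt 3) / 2)]
      have ha1 : 1 ≤ a := by
        have h0A : (0:ℝ) < (a:ℝ) := by linarith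
        have : (0:ℤ) < a := by exact_mod_cast h0A
        omega
      have hval : (⟨a, 1, Par.e⟩ : Digit).Valid := by
        rcases (by omega : a = 1 ∨ 2 ≤ a) with h | h
        · exact Or.inr ⟨h, rfl, rfl⟩
        · exact Or.inl ⟨h, Or.inl rfl⟩
      refine ⟨⟨a, 1, Par.e⟩, hval, t - 2 * (a:ℝ), ⟨by linarith, by linarith⟩, ?_⟩
      rw [hbar_e_eq]
      push_cast
      have he : 2 * (a:ℝ) + (t - 2 * (a:ℝ)) = t := by ring
      rw [he, ht]
      rw [div_eq_iff (by positivity : (1:ℝ) / x ≠ 0)]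
      field_simp
    · rcases lt_or_gt_of_ne hxone with hlt1 | hgt1
      · -- 1/√3 < x < 1 : odd digit with eps = 1
        have hu : (0:ℝ) < 1 - x := by linarith
        have hD : (0:ℝ) < (Real.sqrt 3 - 1) * (1 - x) := by
          apply mul_pos (by linarith) hu
        set a : ℤ := ⌊(x + Real.sqrt 3 - 2) / ((Real.sqrt 3 - 1) * (1 - x))⌋ + 1 with hadef
        have hA1 : (x + Real.sqrt 3 - 2) / ((Real.sqrt 3 - 1) * (1 - x)) < (a:ℝ) := by
          rw [hadef]; push_cast
          linarith [Int.lt_floor_add_one ((x + Real.sqrt 3 - 2) / ((Real.sqrt 3 - 1) * (1 - x)))]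
        have hA2 : (a:ℝ) ≤ (x + Real.sqrt 3 - 2) / ((Real.sqrt 3 - 1) * (1 - x)) + 1 := by
          rw [hadef]; push_cast
          linarith [Int.floor_le ((x + Real.sqrt 3 - 2) / ((Real.sqrt 3 - 1) * (1 - x)))]
        have hw_low : x + Real.sqrt 3 - 2 < (a:ℝ) * ((Real.sqrt 3 - 1) * (1 - x)) :=
          (div_lt_iff₀ hD).mp hA1
        have hw_high : ((a:ℝ) - 1) * ((Real.sqrt 3 - 1) * (1 - x)) ≤ x + Real.sqrt 3 - 2 :=
          (le_div_iff₀ hD).mp (by linarith)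
        have ha2 : 2 ≤ a := by
          have hfl : (1:ℤ) ≤ ⌊(x + Real.sqrt 3 - 2) / ((Real.sqrt 3 - 1) * (1 - x))⌋ := by
            rw [Int.le_floor]
            push_cast
            rw [le_div_iff₀ hD]
            linarith [hlg]
          omega
        have hA : (2:ℝ) ≤ (a:ℝ) := by exact_mod_cast ha2
        have hzero : (Real.sqrt 3 ^ 2 - 3) * (((a:ℝ) - 1) * (1 - x)) = 0 := by
          rw [hsq]; ring
        have h3w : 2 * ((a:ℝ) * (1 - x)) ≤ (Real.sqrt 3 - 1) * (x + Real.sqrt 3) := by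
          have hp : (0:ℝ) ≤ (Real.sqrt 3 + 1) *
              (x + Real.sqrt 3 - 2 - ((a:ℝ) - 1) * ((Real.sqrt 3 - 1) * (1 - x))) :=
            mul_nonneg (by linarith) (by linarith [hw_high])
          linarith [hp, hzero]
        have hzero2 : (Real.sqrt 3 ^ 2 - 3) * (x + Real.sqrt 3) = 0 := by
          rw [hsq]; ring
        have hfin : (1 + Real.sqrt 3) * ((a:ℝ) * (1 - x)) ≤ Real.sqrt 3 + x := by
          have hp := mul_le_mul_of_nonneg_right h3w (by linarith : (0:ℝ) ≤ 1 + Real.sqrt 3)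
          linarith [hp, hzero2]
        have hwlt : (a:ℝ) * (1 - x) < 1 := by
          have h1 : (0:ℝ) < (a:ℝ) * (1 - x) := by positivity
          nlinarith [hfin, hs1]
        have h1w : (0:ℝ) < 1 - (a:ℝ) * (1 - x) := by linarith
        have hy1 : Real.sqrt 3 - 2 ≤ ((a:ℝ) * (1 - x) - x) / (1 - (a:ℝ) * (1 - x)) := by
          rw [le_div_iff₀ h1w]; linarith [hw_low]
        have hy2 : ((a:ℝ) * (1 - x) - x) / (1 - (a:ℝ) * (1 - x)) ≤ Real.sqrt 3 := by
          rw [div_le_iff₀ h1w]; linarith [hfin]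
        refine ⟨⟨a, 1, Par.o⟩, Or.inl ⟨ha2, Or.inl rfl⟩,
          ((a:ℝ) * (1 - x) - x) / (1 - (a:ℝ) * (1 - x)), ⟨hy1, hy2⟩, ?_⟩
        rw [hbar_o1_eq a hA _ hy1]
        have hy_eq : (((a:ℝ) * (1 - x) - x) / (1 - (a:ℝ) * (1 - x))) * (1 - (a:ℝ) * (1 - x))
            = (a:ℝ) * (1 - x) - x := by
          field_simp
        have hden0 : (0:ℝ) < (a:ℝ) * (((a:ℝ) * (1 - x) - x) / (1 - (a:ℝ) * (1 - x))) + (a:ℝ) + 1 := by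
          have := denO1_lb (a:ℝ) _ hA hy1
          linarith [hs3one]
        rw [div_eq_iff hden0.ne']
        linear_combination -hy_eq
      · -- 1 < x ≤ √3 : odd digit with eps = -1
        have hv : (0:ℝ) < x - 1 := by linarith
        have hD : (0:ℝ) < (Real.sqrt 3 - 1) * (x - 1) := by
          apply mul_pos (by linarith) hv
        set a : ℤ := ⌊(1 + (Real.sqrt 3 - 2) * x) / ((Real.sqrt 3 - 1) * (x - 1))⌋ + 1 with hadef
        have hA1 : (1 + (Real.sqrt 3 - 2) * x) / ((Real.sqrt 3 - 1) * (x - 1)) < (a:ℝ) := by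
          rw [hadef]; push_cast
          linarith [Int.lt_floor_add_one ((1 + (Real.sqrt 3 - 2) * x) / ((Real.sqrt 3 - 1) * (x - 1)))]
        have hA2 : (a:ℝ) ≤ (1 + (Real.sqrt 3 - 2) * x) / ((Real.sqrt 3 - 1) * (x - 1)) + 1 := by
          rw [hadef]; push_cast
          linarith [Int.floor_le ((1 + (Real.sqrt 3 - 2) * x) / ((Real.sqrt 3 - 1) * (x - 1)))]
        have hw_low : 1 + (Real.sqrt 3 - 2) * x < (a:ℝ) * ((Real.sqrt 3 - 1) * (x - 1)) :=
          (div_lt_iff₀ hD).mp hA1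
        have hw_high : ((a:ℝ) - 1) * ((Real.sqrt 3 - 1) * (x - 1)) ≤ 1 + (Real.sqrt 3 - 2) * x :=
          (le_div_iff₀ hD).mp (by linarith)
        have ha2 : 2 ≤ a := by
          have hfl : (1:ℤ) ≤ ⌊(1 + (Real.sqrt 3 - 2) * x) / ((Real.sqrt 3 - 1) * (x - 1))⌋ := by
            rw [Int.le_floor]
            push_cast
            rw [le_div_iff₀ hD]
            linarith [hx2]
          omega
        have hA : (2:ℝ) ≤ (a:ℝ) := by exact_mod_cast ha2
        have hzero : (Real.sqrt 3 ^ 2 - 3) * (((a:ℝ) - 1) * (x - 1)) = 0 := by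
          rw [hsq]; ring
        have h3w : 2 * ((a:ℝ) * (x - 1)) ≤ (Real.sqrt 3 - 1) * (1 + Real.sqrt 3 * x) := by
          have hp : (0:ℝ) ≤ (Real.sqrt 3 + 1) *
              (1 + (Real.sqrt 3 - 2) * x - ((a:ℝ) - 1) * ((Real.sqrt 3 - 1) * (x - 1))) :=
            mul_nonneg (by linarith) (by linarith [hw_high])
          linarith [hp, hzero]
        have hzero2 : (Real.sqrt 3 ^ 2 - 3) * x = 0 := by rw [hsq]; ring
        have hwltx : (a:ℝ) * (x - 1) < x := by
          linarith [h3w, hD, hzero2]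
        have hxw : (0:ℝ) < x - (a:ℝ) * (x - 1) := by linarith
        have hzero3 : (Real.sqrt 3 ^ 2 - 3) * (1 + Real.sqrt 3 * x) = 0 := by
          rw [hsq]; ring
        have hfin : (1 + Real.sqrt 3) * ((a:ℝ) * (x - 1)) ≤ 1 + Real.sqrt 3 * x := by
          have hp := mul_le_mul_of_nonneg_right h3w (by linarith : (0:ℝ) ≤ 1 + Real.sqrt 3)
          linarith [hp, hzero3]
        have hflip : (1 - (a:ℝ) * (x - 1)) / ((a:ℝ) * (x - 1) - x)
            = ((a:ℝ) * (x - 1) - 1) / (x - (a:ℝ) * (x - 1)) := by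
          rw [div_eq_div_iff (by linarith : (a:ℝ) * (x - 1) - x ≠ 0) hxw.ne']
          ring
        have hy1 : Real.sqrt 3 - 2 ≤ (1 - (a:ℝ) * (x - 1)) / ((a:ℝ) * (x - 1) - x) := by
          rw [hflip, le_div_iff₀ hxw]; linarith [hw_low]
        have hy2 : (1 - (a:ℝ) * (x - 1)) / ((a:ℝ) * (x - 1) - x) ≤ Real.sqrt 3 := by
          rw [hflip, div_le_iff₀ hxw]; linarith [hfin]
        refine ⟨⟨a, -1, Par.o⟩, Or.inl ⟨ha2, Or.inr rfl⟩,
          (1 - (a:ℝ) * (x - 1)) / ((a:ℝ) * (x - 1) - x), ⟨hy1, hy2⟩, ?_⟩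
        rw [hbar_o2_eq a hA _ hy1]
        have hy_eq : ((1 - (a:ℝ) * (x - 1)) / ((a:ℝ) * (x - 1) - x)) * ((a:ℝ) * (x - 1) - x)
            = 1 - (a:ℝ) * (x - 1) :=
          div_mul_cancel₀ _ (ne_of_lt (by linarith : (a:ℝ) * (x - 1) - x < 0))
        have hden0 : (0:ℝ) < ((a:ℝ) - 1) * ((1 - (a:ℝ) * (x - 1)) / ((a:ℝ) * (x - 1) - x)) + (a:ℝ) := by
          have := denO_lb (a:ℝ) _ hA hy1
          linarith [hs3one]
        rw [div_eq_iff hden0.ne']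
        linear_combination -hy_eq


private def SSet : Set ℝ := {z : ℝ | ∃ l : List Digit, l ≠ [] ∧ (∀ d ∈ l, d.Valid) ∧
    z = l.foldr (fun d y => hbar d y) 0}

private lemma foldr_mem (l : List Digit) (h : ∀ d ∈ l, d.Valid) :
    Real.sqrt 3 - 2 ≤ l.foldr (fun d y => hbar d y) 0 ∧
      l.foldr (fun d y => hbar d y) 0 ≤ Real.sqrt 3 := by
  induction l with
  | nil =>
    simp only [List.foldr_nil]
    constructor
    · linarith [hs3two]
    · linarith [hs3one]
  | cons d t ih =>
    have ht := ih (fun e he => h e (List.mem_cons_of_mem _ he))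
    simpa only [List.foldr_cons] using
      hbar_mem d (h d (List.mem_cons_self)) _ ht.1 ht.2

private lemma SSet_sub : SSet ⊆ Set.Icc (Real.sqrt 3 - 2) (Real.sqrt 3) := by
  rintro z ⟨l, _, hv, rfl⟩
  exact foldr_mem l hv

private lemma closure_SSet_sub :
    closure SSet ⊆ Set.Icc (Real.sqrt 3 - 2) (Real.sqrt 3) :=
  closure_minimal SSet_sub isClosed_Icc

private lemma closure_stable (d : Digit) (hd : d.Valid) (c : ℝ)
    (hc : c ∈ closure SSet) : hbar d c ∈ closure SSet := by
  have hcI := closure_SSet_sub hc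
  rw [Metric.mem_closure_iff] at hc ⊢
  intro ε hε
  obtain ⟨z, hzS, hz⟩ := hc ε hε
  obtain ⟨l, hl, hv, he⟩ := hzS
  have hzI := SSet_sub ⟨l, hl, hv, he⟩
  refine ⟨hbar d z, ⟨d :: l, by simp, ?_, by rw [he]; simp [List.foldr_cons]⟩, ?_⟩
  · intro e he'
    rcases List.mem_cons.mp he' with h | h
    · subst h; exact hd
    · exact hv e h
  · have hlip := hbar_lip d hd c z hcI.1 hcI.2 hzI.1 hzI.2
    rw [Real.dist_eq] at hz ⊢
    calc |hbar d c - hbar d z| ≤ |c - z| / 3 := hlip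
      _ < ε := by linarith [abs_nonneg (c - z)]

private lemma zero_mem_closure : (0:ℝ) ∈ closure SSet := by
  rw [Metric.mem_closure_iff]
  intro ε hε
  obtain ⟨n, hn⟩ := exists_nat_one_div_lt hε
  have hval : (⟨(n:ℤ) + 1, 1, Par.e⟩ : Digit).Valid := by
    rcases (by omega : (n:ℤ) + 1 = 1 ∨ 2 ≤ (n:ℤ) + 1) with h | h
    · exact Or.inr ⟨h, rfl, rfl⟩
    · exact Or.inl ⟨h, Or.inl rfl⟩
  refine ⟨hbar ⟨(n:ℤ) + 1, 1, Par.e⟩ 0, ⟨[⟨(n:ℤ) + 1, 1, Par.e⟩], by simp,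
    by intro e he; rw [List.mem_singleton] at he; subst he; exact hval, by simp⟩, ?_⟩
  have hv : hbar ⟨(n:ℤ) + 1, 1, Par.e⟩ 0 = 1 / (2 * ((n:ℝ) + 1)) := by
    rw [hbar_e_eq]; push_cast; norm_num
  rw [hv, Real.dist_eq]
  have hp : (0:ℝ) < 1 / (2 * ((n:ℝ) + 1)) := by positivity
  rw [zero_sub, abs_neg, abs_of_pos hp]
  have h2 : 1 / (2 * ((n:ℝ) + 1)) ≤ 1 / ((n:ℝ) + 1) := by
    apply one_div_le_one_div_of_le (by positivity)
    linarith
  linarith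
  
private lemma one_mem_closure : (1:ℝ) ∈ closure SSet := by
  rw [Metric.mem_closure_iff]
  intro ε hε
  obtain ⟨n, hn⟩ := exists_nat_one_div_lt hε
  have hA : (2:ℝ) ≤ (((n:ℤ) + 2 : ℤ) : ℝ) := by push_cast; linarith [Nat.cast_nonneg (α := ℝ) n]
  have h0 : Real.sqrt 3 - 2 ≤ (0:ℝ) := by linarith [hs3two]
  refine ⟨hbar ⟨(n:ℤ) + 2, 1, Par.o⟩ 0, ⟨[⟨(n:ℤ) + 2, 1, Par.o⟩], by simp,
    by intro e he; rw [List.mem_singleton] at he; subst he;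
       exact Or.inl ⟨show (2:ℤ) ≤ (n:ℤ) + 2 by omega, Or.inl rfl⟩, by simp⟩, ?_⟩
  have hv : hbar ⟨(n:ℤ) + 2, 1, Par.o⟩ 0 = ((n:ℝ) + 2) / ((n:ℝ) + 3) := by
    rw [hbar_o1_eq ((n:ℤ) + 2) hA 0 h0]
    push_cast
    norm_num
    ring
  rw [hv, Real.dist_eq]
  have hp : (0:ℝ) < (n:ℝ) + 3 := by positivity
  have he : (1:ℝ) - ((n:ℝ) + 2) / ((n:ℝ) + 3) = 1 / ((n:ℝ) + 3) := by
    field_simp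
    norm_num
  rw [he, abs_of_pos (by positivity)]
  have h2 : 1 / ((n:ℝ) + 3) ≤ 1 / ((n:ℝ) + 1) := by
    apply one_div_le_one_div_of_le (by positivity)
    linarith
  linarith

private lemma approx : ∀ n : ℕ, ∀ x : ℝ, Real.sqrt 3 - 2 ≤ x → x ≤ Real.sqrt 3 →
    ∃ c ∈ closure SSet, |x - c| ≤ 2 * (1/3:ℝ) ^ n := by
  intro n
  induction n with
  | zero =>
    intro x hx1 hx2
    refine ⟨0, zero_mem_closure, ?_⟩
    rw [pow_zero, mul_one, sub_zero]
    rw [abs_le]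
    constructor
    · linarith [hs3one]
    · linarith [hs3two]
  | succ n ih =>
    intro x hx1 hx2
    by_cases h0 : x = 0
    · exact ⟨0, zero_mem_closure, by rw [h0, sub_zero, abs_zero]; positivity⟩
    by_cases h1 : x = 1
    · exact ⟨1, one_mem_closure, by rw [h1, sub_self, abs_zero]; positivity⟩
    obtain ⟨d, hd, y, ⟨hy1, hy2⟩, hyx⟩ := cover x hx1 hx2 h0 h1
    obtain ⟨c, hcC, hc⟩ := ih y hy1 hy2
    have hcI := closure_SSet_sub hcC
    refine ⟨hbar d c, closure_stable d hd c hcC, ?_⟩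
    have hlip := hbar_lip d hd y c hy1 hy2 hcI.1 hcI.2
    rw [← hyx]
    calc |hbar d y - hbar d c| ≤ |y - c| / 3 := hlip
      _ ≤ 2 * (1/3:ℝ) ^ n / 3 := by linarith
      _ = 2 * (1/3:ℝ) ^ (n + 1) := by rw [pow_succ]; ring
-- AUX END
/-- the closure of the set of all finite compositions
`bar h_{B₁} ∘ ⋯ ∘ bar h_{B_n} (0)` of dual inverse branches applied to `0`
equals `[√3 − 2, √3]`. -/
theorem dual_domain_eq_Icc :
    closure {z : ℝ | ∃ l : List Digit, l ≠ [] ∧ (∀ d ∈ l, d.Valid) ∧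
        z = l.foldr (fun d y => hbar d y) 0} =
      Set.Icc (Real.sqrt 3 - 2) (Real.sqrt 3) := by
  have hset : {z : ℝ | ∃ l : List Digit, l ≠ [] ∧ (∀ d ∈ l, d.Valid) ∧
      z = l.foldr (fun d y => hbar d y) 0} = SSet := rfl
  rw [hset]
  refine subset_antisymm closure_SSet_sub ?_
  intro x hx
  have hmem : x ∈ closure (closure SSet) := by
    rw [Metric.mem_closure_iff]
    intro ε hε
    obtain ⟨n, hn⟩ := exists_pow_lt_of_lt_one (show (0:ℝ) < ε / 2 by linarith)
      (show (1/3:ℝ) < 1 by norm_num)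
    obtain ⟨c, hc, hcd⟩ := approx n x hx.1 hx.2
    refine ⟨c, hc, ?_⟩
    rw [Real.dist_eq]
    calc |x - c| ≤ 2 * (1/3:ℝ) ^ n := hcd
      _ < ε := by linarith
  rwa [closure_closure] at hmem

end SCF
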